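/- Let μ₁, μ₂ be sub-distributions over countable sets A₁, A₂ and let S₁ ⊆ A₁, S₂ ⊆ A₂. If there exists a coupling of (μ₁, μ₂) with support contained in {(a₁,a₂) : a₁ ∈ S₁ → a₂ ∈ S₂}, then μ₁(S₁) ≤ μ₂(S₂). Conversely, if μ₁(S₁) ≤ μ₂(S₂) and μ₁, μ₂ have equal total weight, such a coupling exists. -/

import Mathlib

open scoped ENNReal

noncomputable section

/-- A discrete sub-distribution: total mass at most 1. -/
def IsSubDist {A : Type*} (μ : A → ℝ≥0∞) : Prop := ∑' a, μ a ≤ 1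

/-- Mass of a set under `μ`. -/
def setSum {A : Type*} (μ : A → ℝ≥0∞) (S : Set A) : ℝ≥0∞ := ∑' a : S, μ (a : A)

/-- `μ` is a coupling of `(μ₁, μ₂)`: a joint sub-distribution with the given marginals. -/
def IsCoupling {A₁ A₂ : Type*} (μ : A₁ × A₂ → ℝ≥0∞)
    (μ₁ : A₁ → ℝ≥0∞) (μ₂ : A₂ → ℝ≥0∞) : Prop :=
  IsSubDist μ ∧ (∀ a₁, ∑' a₂, μ (a₁, a₂) = μ₁ a₁) ∧ (∀ a₂, ∑' a₁, μ (a₁, a₂) = μ₂ a₂)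

/-- Image of a set under a relation. -/
def relImage {A₁ A₂ : Type*} (R : Set (A₁ × A₂)) (S : Set A₁) : Set A₂ :=
  {a₂ | ∃ a₁ ∈ S, (a₁, a₂) ∈ R}

/-- `R⋆ = R ∪ (A₁ × {⋆}) ∪ ({⋆} × A₂)`, with `⋆` modelled by `none`. -/
def starRel {A₁ A₂ : Type*} (R : Set (A₁ × A₂)) : Set (Option A₁ × Option A₂) :=
  {p | match p with
       | (some a₁, some a₂) => (a₁, a₂) ∈ R
       | (some _, none) => True
       | (none, some _) => True
       | (none, none) => False}

/-- `(ε, δ)`-approximate `R`-lifting of `(μ₁, μ₂)`, witnessed by two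
sub-distributions over `A₁⋆ × A₂⋆` with marginal, support, and ε-distance conditions. -/
def ApproxLift {A₁ A₂ : Type*} (ε δ : ℝ) (R : Set (A₁ × A₂))
    (μ₁ : A₁ → ℝ≥0∞) (μ₂ : A₂ → ℝ≥0∞) : Prop :=
  ∃ μL μR : Option A₁ × Option A₂ → ℝ≥0∞,
    IsSubDist μL ∧ IsSubDist μR ∧
    (∀ a₁, ∑' o, μL (some a₁, o) = μ₁ a₁) ∧ (∀ o, μL (none, o) = 0) ∧
    (∀ a₂, ∑' o, μR (o, some a₂) = μ₂ a₂) ∧ (∀ o, μR (o, none) = 0) ∧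
    {p | μL p ≠ 0} ⊆ starRel R ∧ {p | μR p ≠ 0} ⊆ starRel R ∧
    ∀ S : Set (Option A₁ × Option A₂),
      setSum μL S ≤ ENNReal.ofReal (Real.exp ε) * setSum μR S + ENNReal.ofReal δ

lemma setSum_le_total' {A : Type*} (μ : A → ℝ≥0∞) (S : Set A) :
    setSum μ S ≤ ∑' a, μ a := by
  rw [setSum, tsum_subtype]
  exact ENNReal.tsum_le_tsum (fun a => Set.indicator_le_self S μ a)

lemma setSum_split' {A : Type*} (μ : A → ℝ≥0∞) (S : Set A) :
    setSum μ S + setSum μ Sᶜ = ∑' a, μ a :=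
  Summable.tsum_add_tsum_compl ENNReal.summable ENNReal.summable

lemma setSum_zero_mem' {A : Type*} {μ : A → ℝ≥0∞} {S : Set A} (h : setSum μ S = 0)
    {a : A} (ha : a ∈ S) : μ a = 0 := by
  rw [setSum, ENNReal.tsum_eq_zero] at h
  exact h ⟨a, ha⟩

theorem imp_coupling {A₁ A₂ : Type*} [Countable A₁] [Countable A₂]
    (μ₁ : A₁ → ℝ≥0∞) (μ₂ : A₂ → ℝ≥0∞) (S₁ : Set A₁) (S₂ : Set A₂)
    (h₁ : IsSubDist μ₁) (h₂ : IsSubDist μ₂) :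
    ((∃ μ : A₁ × A₂ → ℝ≥0∞, IsCoupling μ μ₁ μ₂ ∧
        {p | μ p ≠ 0} ⊆ {p : A₁ × A₂ | p.1 ∈ S₁ → p.2 ∈ S₂}) →
      setSum μ₁ S₁ ≤ setSum μ₂ S₂) ∧
    ((∑' a, μ₁ a = ∑' a, μ₂ a) → setSum μ₁ S₁ ≤ setSum μ₂ S₂ →
      ∃ μ : A₁ × A₂ → ℝ≥0∞, IsCoupling μ μ₁ μ₂ ∧
        {p | μ p ≠ 0} ⊆ {p : A₁ × A₂ | p.1 ∈ S₁ → p.2 ∈ S₂}) := by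
  classical
  constructor
  · -- forward direction
    rintro ⟨μ, ⟨hsub, hm1, hm2⟩, hsupp⟩
    have key : ∀ a₁ ∈ S₁, μ₁ a₁ = ∑' a₂ : S₂, μ (a₁, a₂) := by
      intro a₁ ha₁
      rw [← hm1 a₁, tsum_subtype S₂ (fun a₂ => μ (a₁, a₂))]
      refine tsum_congr fun a₂ => ?_
      by_cases h : a₂ ∈ S₂
      · simp [Set.indicator_of_mem h]
      · rw [Set.indicator_of_notMem h]
        by_contra hne
        exact h (hsupp hne ha₁)
    calc setSum μ₁ S₁ = ∑' a₁ : S₁, ∑' a₂ : S₂, μ ((a₁ : A₁), (a₂ : A₂)) := by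
          rw [setSum]; exact tsum_congr fun a₁ => key a₁ a₁.2
      _ ≤ ∑' a₁, ∑' a₂ : S₂, μ (a₁, (a₂ : A₂)) := by
          rw [tsum_subtype S₁ (fun a₁ => ∑' a₂ : S₂, μ (a₁, (a₂ : A₂)))]
          exact ENNReal.tsum_le_tsum (fun a => Set.indicator_le_self _ _ a)
      _ = ∑' a₂ : S₂, ∑' a₁, μ (a₁, (a₂ : A₂)) := ENNReal.tsum_comm
      _ = setSum μ₂ S₂ := tsum_congr fun a₂ => hm2 a₂
  · -- converse
    intro heq hle
    set w := ∑' a, μ₁ a with hw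
    set m₁ := setSum μ₁ S₁ with hm₁
    set m₂ := setSum μ₂ S₂ with hm₂
    have hwfin : w ≠ ∞ := (h₁.trans_lt ENNReal.one_lt_top).ne
    have hm₁w : m₁ ≤ w := setSum_le_total' μ₁ S₁
    have hm₂w : m₂ ≤ w := by rw [heq]; exact setSum_le_total' μ₂ S₂
    have hm₁fin : m₁ ≠ ∞ := (hm₁w.trans_lt hwfin.lt_top).ne
    have hm₂fin : m₂ ≠ ∞ := (hm₂w.trans_lt hwfin.lt_top).ne
    set I : A₂ → ℝ≥0∞ := S₂.indicator μ₂ with hI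
    set c := m₁ / m₂ with hc
    set ν : A₂ → ℝ≥0∞ := fun a₂ => μ₂ a₂ - c * I a₂ with hν
    set r := w - m₁ with hr
    have hrfin : r ≠ ∞ := ((tsub_le_self).trans_lt hwfin.lt_top).ne
    have hIsum : ∑' a₂, I a₂ = m₂ := by rw [hI, ← tsum_subtype]; rfl
    have hcle : c ≤ 1 :=
      (ENNReal.div_le_div_right hle m₂).trans ENNReal.div_self_le_one
    have hcI : ∀ a₂, c * I a₂ ≤ μ₂ a₂ := by
      intro a₂
      by_cases h : a₂ ∈ S₂
      · rw [hI, Set.indicator_of_mem h]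
        calc c * μ₂ a₂ ≤ 1 * μ₂ a₂ := mul_le_mul_left hcle _
          _ = μ₂ a₂ := one_mul _
      · rw [hI, Set.indicator_of_notMem h, mul_zero]; exact zero_le
    have hcm : c * m₂ = m₁ := by
      by_cases h : m₂ = 0
      · have h0 : m₁ = 0 := le_antisymm (h ▸ hle) zero_le
        rw [h, h0, mul_zero]
      · rw [hc, mul_comm, ENNReal.mul_div_cancel h hm₂fin]
    have hνsum : ∑' a₂, ν a₂ = r := by
      have hadd : (∑' a₂, ν a₂) + m₁ = w := by
        calc (∑' a₂, ν a₂) + m₁ = (∑' a₂, ν a₂) + c * m₂ := by rw [hcm]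
          _ = (∑' a₂, ν a₂) + ∑' a₂, c * I a₂ := by rw [ENNReal.tsum_mul_left, hIsum]
          _ = ∑' a₂, (ν a₂ + c * I a₂) := (ENNReal.tsum_add).symm
          _ = ∑' a₂, μ₂ a₂ := tsum_congr fun a₂ => tsub_add_cancel_of_le (hcI a₂)
          _ = w := heq.symm
      rw [hr, ← hadd, ENNReal.add_sub_cancel_right hm₁fin]
    have hcompl : setSum μ₁ S₁ᶜ = r := by
      have hs := setSum_split' μ₁ S₁
      rw [← hw, ← hm₁] at hs
      rw [hr, ← hs, ENNReal.add_sub_cancel_left hm₁fin]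
    set f : A₁ × A₂ → ℝ≥0∞ :=
      fun p => if p.1 ∈ S₁ then μ₁ p.1 * (I p.2 / m₂) else μ₁ p.1 * (ν p.2 / r) with hf
    have hmar1 : ∀ a₁, ∑' a₂, f (a₁, a₂) = μ₁ a₁ := by
      intro a₁
      by_cases ha : a₁ ∈ S₁
      · simp only [hf, ha, if_true]
        rw [ENNReal.tsum_mul_left]
        by_cases h0 : m₂ = 0
        · have hm10 : m₁ = 0 := le_antisymm (h0 ▸ hle) zero_le
          have hz : μ₁ a₁ = 0 := setSum_zero_mem' hm10 ha
          rw [hz, zero_mul]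
        · simp only [div_eq_mul_inv]
          rw [ENNReal.tsum_mul_right, hIsum,
            ENNReal.mul_inv_cancel h0 hm₂fin, mul_one]
      · simp only [hf, ha, if_false]
        rw [ENNReal.tsum_mul_left]
        by_cases h0 : r = 0
        · have hz : μ₁ a₁ = 0 := setSum_zero_mem' (hcompl.trans h0) ha
          rw [hz, zero_mul]
        · simp only [div_eq_mul_inv]
          rw [ENNReal.tsum_mul_right, hνsum,
            ENNReal.mul_inv_cancel h0 hrfin, mul_one]
    have hmar2 : ∀ a₂, ∑' a₁, f (a₁, a₂) = μ₂ a₂ := by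
      intro a₂
      have hpt : ∀ a₁ : A₁, f (a₁, a₂)
          = S₁.indicator (fun a => μ₁ a * (I a₂ / m₂)) a₁
            + S₁ᶜ.indicator (fun a => μ₁ a * (ν a₂ / r)) a₁ := by
        intro a₁
        by_cases h : a₁ ∈ S₁
        · simp only [hf, h, if_true]
          rw [Set.indicator_of_mem h,
            Set.indicator_of_notMem (by simpa using h), add_zero]
        · simp only [hf, h, if_false]
          rw [Set.indicator_of_notMem h,
            Set.indicator_of_mem (by simpa using h), zero_add]
      rw [tsum_congr hpt, ENNReal.tsum_add, ← tsum_subtype, ← tsum_subtype,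
        ENNReal.tsum_mul_right, ENNReal.tsum_mul_right]
      have e1 : (∑' a : S₁, μ₁ (a : A₁)) * (I a₂ / m₂) = c * I a₂ := by
        rw [show (∑' a : S₁, μ₁ (a : A₁)) = m₁ from rfl, hc, div_eq_mul_inv,
          div_eq_mul_inv]
        ring
      have e2 : (∑' a : ↥S₁ᶜ, μ₁ (a : A₁)) * (ν a₂ / r) = ν a₂ := by
        rw [show (∑' a : ↥S₁ᶜ, μ₁ (a : A₁)) = r from hcompl]
        by_cases h0 : r = 0
        · have hz : ν a₂ = 0 := by
            have h' := hνsum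
            rw [h0, ENNReal.tsum_eq_zero] at h'
            exact h' a₂
          rw [h0, hz, zero_mul]
        · rw [div_eq_mul_inv, mul_comm, mul_assoc,
            ENNReal.inv_mul_cancel h0 hrfin, mul_one]
      rw [e1, e2, add_comm, tsub_add_cancel_of_le (hcI a₂)]
    refine ⟨f, ⟨?_, hmar1, hmar2⟩, ?_⟩
    · show ∑' p, f p ≤ 1
      calc ∑' p, f p = ∑' a₁, ∑' a₂, f (a₁, a₂) := ENNReal.tsum_prod'
        _ = ∑' a₁, μ₁ a₁ := tsum_congr hmar1
        _ ≤ 1 := h₁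
    · rintro ⟨a₁, a₂⟩ hne ha₁
      simp only [hf, Set.mem_setOf_eq, ha₁, if_true] at hne
      by_contra h
      rw [hI] at hne
      simp [Set.indicator_of_notMem h] at hne
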